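/- Let R be a commutative ring and f ∈ R⟦x⟧ a formal power series in one variable. Then there exists a unique two-variable formal power series u ∈ R⟦t,x⟧ satisfying u = f(x + t·u), where f(x + t·u) denotes the substitution of the series x + t·u (which has zero constant coefficient) into f. -/

import Mathlib

/-- Substitution of a two-variable formal power series `w` (intended to have zero
constant coefficient) into a one-variable formal power series `f`: the coefficient of
the monomial `m` in `f(w)` is `∑_{n ≤ |m|} (coeff n f) · (coeff m (w^n))`, where `|m|`
is the total degree of `m`. -/
noncomputable def substTwoVar {R : Type*} [CommRing R] (f : PowerSeries R)
    (w : MvPowerSeries (Fin 2) R) : MvPowerSeries (Fin 2) R :=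
  fun m => ∑ n ∈ Finset.range ((m.sum fun _ e => e) + 1),
    PowerSeries.coeff n f * MvPowerSeries.coeff m (w ^ n)

namespace Statement7Aux

open MvPowerSeries

variable {R : Type*} [CommRing R]

lemma coeff_substTwoVar (f : PowerSeries R) (w : MvPowerSeries (Fin 2) R) (m : Fin 2 →₀ ℕ) :
    MvPowerSeries.coeff m (substTwoVar f w) =
      ∑ n ∈ Finset.range ((m.sum fun _ e => e) + 1),
        PowerSeries.coeff n f * MvPowerSeries.coeff m (w ^ n) := rfl

lemma pow_agree {N : ℕ} {w1 w2 : MvPowerSeries (Fin 2) R}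
    (h : ∀ m : Fin 2 →₀ ℕ, m 0 ≤ N →
      MvPowerSeries.coeff m w1 = MvPowerSeries.coeff m w2) (n : ℕ) :
    ∀ m : Fin 2 →₀ ℕ, m 0 ≤ N →
      MvPowerSeries.coeff m (w1 ^ n) = MvPowerSeries.coeff m (w2 ^ n) := by
  induction n with
  | zero => simp
  | succ n ih =>
    intro m hm
    rw [pow_succ, pow_succ, MvPowerSeries.coeff_mul, MvPowerSeries.coeff_mul]
    apply Finset.sum_congr rfl
    intro p hp
    rw [Finset.HasAntidiagonal.mem_antidiagonal] at hp
    have hsum : p.1 0 + p.2 0 = m 0 := by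
      rw [← Finsupp.add_apply, hp]
    rw [ih p.1 (by omega), h p.2 (by omega)]

lemma base_agree {N : ℕ} {u v : MvPowerSeries (Fin 2) R}
    (h : ∀ m : Fin 2 →₀ ℕ, m 0 < N →
      MvPowerSeries.coeff m u = MvPowerSeries.coeff m v) :
    ∀ m : Fin 2 →₀ ℕ, m 0 ≤ N →
      MvPowerSeries.coeff m (MvPowerSeries.X 1 + MvPowerSeries.X 0 * u) =
      MvPowerSeries.coeff m (MvPowerSeries.X 1 + MvPowerSeries.X 0 * v) := by
  intro m hm
  rw [map_add, map_add]
  congr 1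
  rw [X_def, coeff_monomial_mul, coeff_monomial_mul]
  split_ifs with hle
  · congr 1
    have h1 : (1 : ℕ) ≤ m 0 := by
      have := hle 0
      simpa using this
    apply h
    rw [Finsupp.tsub_apply, Finsupp.single_eq_same]
    omega
  · rfl

lemma contraction (f : PowerSeries R) {N : ℕ} {u v : MvPowerSeries (Fin 2) R}
    (h : ∀ m : Fin 2 →₀ ℕ, m 0 < N →
      MvPowerSeries.coeff m u = MvPowerSeries.coeff m v) :
    ∀ m : Fin 2 →₀ ℕ, m 0 ≤ N →
      MvPowerSeries.coeff m (substTwoVar f (MvPowerSeries.X 1 + MvPowerSeries.X 0 * u)) =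
      MvPowerSeries.coeff m (substTwoVar f (MvPowerSeries.X 1 + MvPowerSeries.X 0 * v)) := by
  intro m hm
  rw [coeff_substTwoVar, coeff_substTwoVar]
  apply Finset.sum_congr rfl
  intro n _
  rw [pow_agree (base_agree h) n m hm]

noncomputable def G (f : PowerSeries R) (u : MvPowerSeries (Fin 2) R) :
    MvPowerSeries (Fin 2) R :=
  substTwoVar f (MvPowerSeries.X 1 + MvPowerSeries.X 0 * u)

noncomputable def seq (f : PowerSeries R) : ℕ → MvPowerSeries (Fin 2) R
  | 0 => 0
  | n + 1 => G f (seq f n)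

lemma seq_stab (f : PowerSeries R) : ∀ N : ℕ, ∀ m : Fin 2 →₀ ℕ, m 0 ≤ N →
    MvPowerSeries.coeff m (seq f (N + 1)) = MvPowerSeries.coeff m (seq f (N + 2)) := by
  intro N
  induction N with
  | zero =>
    intro m hm
    exact contraction f (fun m' hm' => absurd hm' (by omega)) m hm
  | succ N ih =>
    intro m hm
    exact contraction f (fun m' hm' => ih m' (by omega)) m hm

lemma seq_stab' (f : PowerSeries R) (N : ℕ) : ∀ j : ℕ, ∀ m : Fin 2 →₀ ℕ, m 0 ≤ N →
    MvPowerSeries.coeff m (seq f (N + 1)) = MvPowerSeries.coeff m (seq f (N + 1 + j)) := by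
  intro j
  induction j with
  | zero => intro m _; rfl
  | succ j ih =>
    intro m hm
    rw [ih m hm]
    rcases j with _ | j
    · exact seq_stab f N m hm
    · have := seq_stab f (N + j + 1) m (by omega)
      rw [show N + 1 + (j + 1) = N + j + 1 + 1 by ring, this]
      congr 1
      ring_nf

noncomputable def sol (f : PowerSeries R) : MvPowerSeries (Fin 2) R :=
  fun m => MvPowerSeries.coeff m (seq f (m 0 + 1))

lemma coeff_sol (f : PowerSeries R) (m : Fin 2 →₀ ℕ) :
    MvPowerSeries.coeff m (sol f) = MvPowerSeries.coeff m (seq f (m 0 + 1)) := rfl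

lemma coeff_sol_eq (f : PowerSeries R) (m : Fin 2 →₀ ℕ) (N : ℕ) (h : m 0 ≤ N) :
    MvPowerSeries.coeff m (sol f) = MvPowerSeries.coeff m (seq f (N + 1)) := by
  rw [coeff_sol]
  have h1 := seq_stab' f (m 0) (N - m 0) m le_rfl
  rw [show m 0 + 1 + (N - m 0) = N + 1 by omega] at h1
  exact h1

lemma sol_fixed (f : PowerSeries R) : sol f = G f (sol f) := by
  ext m
  rw [coeff_sol]
  show MvPowerSeries.coeff m (G f (seq f (m 0))) = _
  refine contraction f (fun m' hm' => ?_) m le_rfl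
  have h1 : m 0 - 1 + 1 = m 0 := by omega
  rw [coeff_sol_eq f m' (m 0 - 1) (by omega), h1]

end Statement7Aux

/-- For any formal power series `f ∈ R⟦x⟧` there is a unique
two-variable formal power series `u ∈ R⟦t,x⟧` (here `t = X 0`, `x = X 1`) satisfying
`u = f(x + t·u)`. -/
theorem statement7 {R : Type*} [CommRing R] (f : PowerSeries R) :
    ∃! u : MvPowerSeries (Fin 2) R,
      u = substTwoVar f (MvPowerSeries.X 1 + MvPowerSeries.X 0 * u) := by
  refine ⟨Statement7Aux.sol f, Statement7Aux.sol_fixed f, ?_⟩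
  intro v hv
  have key : ∀ N : ℕ, ∀ m : Fin 2 →₀ ℕ, m 0 ≤ N →
      MvPowerSeries.coeff m v = MvPowerSeries.coeff m (Statement7Aux.sol f) := by
    intro N
    induction N using Nat.strong_induction_on with
    | _ N ih =>
      intro m hm
      rw [hv, Statement7Aux.sol_fixed f]
      exact Statement7Aux.contraction f
        (fun m' hm' => ih (m' 0) (by omega) m' le_rfl) m hm
  ext m
  exact key (m 0) m le_rfl
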